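/- Let V be a combinatorial vector field on a finite simplicial complex X of dimension d, fix 0 < γ < ε < 1/(d+1), and for σ ∈ X define A_σ := {x ∈ |σ⁺| : t_v(x) ≥ γ for all v ∈ σ⁻} ∪ |σ⁻|. Suppose 0 < δ̃ < γ and A_σ ∩ cl ⟨τ⟩_{δ̃} ≠ ∅ for simplices σ, τ ∈ X. Then either τ is a face of σ⁻ or τ = σ⁺. -/
import Mathlib


/-- The closed geometric simplex spanned by a set `s` of vertices. -/
def gsS {V : Type*} [Fintype V] (s : Set V) : Set (V → ℝ) :=
  {x | (∀ v, 0 ≤ x v) ∧ (∀ v, v ∉ s → x v = 0) ∧ ∑ v, x v = 1}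

/-- The geometric realization of a simplicial complex `K`. -/
def geomReal {V : Type*} [Fintype V] (K : Set (Finset V)) : Set (V → ℝ) :=
  ⋃ σ ∈ K, gsS (↑σ : Set V)

/-- The closure of the `λ`-cell of a simplex `τ` inside `|X|`. -/
def clLamCell {V : Type*} [Fintype V] (K : Set (Finset V)) (lam : ℝ)
    (τ : Finset V) : Set (V → ℝ) :=
  {x | x ∈ geomReal K ∧ (∀ v ∈ τ, lam ≤ x v) ∧ ∀ v ∉ τ, x v ≤ lam}

/-- The set `A_σ` associated with the vector `(σ⁻, σ⁺)`. -/
def Aset {V : Type*} [Fintype V] (γ : ℝ) (σm σp : Finset V) : Set (V → ℝ) :=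
  {x | x ∈ gsS (↑σp : Set V) ∧ ∀ v ∈ σm, γ ≤ x v} ∪ gsS (↑σm : Set V)

/-- if `0 < δ̃ < γ` and `A_σ ∩ cl ⟨τ⟩_δ̃ ≠ ∅`, then either `τ`
is a face of `σ⁻` or `τ = σ⁺`. -/
theorem Aset_meet_cell {V : Type*} [Fintype V] [DecidableEq V]
    (K : Set (Finset V)) (d : ℕ)
    (hne : ∀ σ ∈ K, σ.Nonempty)
    (hK : ∀ σ ∈ K, ∀ τ : Finset V, τ ⊆ σ → τ.Nonempty → τ ∈ K)
    (hdim : ∀ σ ∈ K, σ.card ≤ d + 1)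
    (γ ε : ℝ) (hγ : 0 < γ) (hγε : γ < ε) (hε : ε < 1 / (d + 1))
    (σm σp τ : Finset V) (hm : σm ∈ K) (hp : σp ∈ K) (hτ : τ ∈ K)
    (hsub : σm ⊆ σp)
    -- either `σ` is critical (`σ⁻ = σ⁺`) or `σ⁻` is a facet of `σ⁺`:
    (hcodim : σm = σp ∨ (σp \ σm).card = 1)
    (dlt : ℝ) (hd0 : 0 < dlt) (hdγ : dlt < γ)
    (hmeet : (Aset γ σm σp ∩ clLamCell K dlt τ).Nonempty) :
    τ ⊆ σm ∨ τ = σp := by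
  obtain ⟨x, hA, hgr, hge, hle⟩ := hmeet
  rcases hA with ⟨⟨hx0, hxz, hxs⟩, hγm⟩ | ⟨hx0, hxz, hxs⟩
  · have hτp : τ ⊆ σp := by
      intro v hv
      by_contra hvp
      have h1 := hxz v (by simpa using hvp)
      have h2 := hge v hv
      linarith
    have hmτ : σm ⊆ τ := by
      intro v hv
      by_contra hvt
      have h1 := hle v hvt
      have h2 := hγm v hv
      linarith
    rcases hcodim with h | h
    · left; exact h ▸ hτp
    · obtain ⟨w, hw⟩ := Finset.card_eq_one.mp h
      by_cases hwτ : w ∈ τ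
      · right
        refine Finset.Subset.antisymm hτp (fun v hv => ?_)
        by_cases hvm : v ∈ σm
        · exact hmτ hvm
        · have hv' : v ∈ σp \ σm := Finset.mem_sdiff.mpr ⟨hv, hvm⟩
          rw [hw, Finset.mem_singleton] at hv'
          exact hv' ▸ hwτ
      · left
        intro v hv
        by_contra hvm
        have hv' : v ∈ σp \ σm := Finset.mem_sdiff.mpr ⟨hτp hv, hvm⟩
        rw [hw, Finset.mem_singleton] at hv'
        exact hwτ (hv' ▸ hv)
  · left
    intro v hv
    by_contra hvm
    have h1 := hxz v (by simpa using hvm)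
    have h2 := hge v hv
    linarith
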